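/- Let 𝔽 be a finite field with m elements, let k ≥ 1, and let u^(1), …, u^(k) : ℕ → 𝔽 be sequences satisfying a polyrec system: there are polynomials P_1, …, P_k ∈ 𝔽[x_1,…,x_k] with u^(i)_{n+1} = P_i(u^(1)_n, …, u^(k)_n) for all n ∈ ℕ and each i. Then u^(1)_n = 0 for all n ∈ ℕ if, and only if, u^(1)_n = 0 for all n ≤ m^k. -/
import Mathlib


/-- for a polyrec system over a finite field with `m` elements,
the first sequence is identically zero iff its first `m^k + 1` values are zero. -/
theorem polyrec_zeroness_finite_field
    (F : Type*) [Field F] [Fintype F]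
    (k : ℕ) (hk : 0 < k)
    (U : Fin k → ℕ → F) (P : Fin k → MvPolynomial (Fin k) F)
    (hrec : ∀ (n : ℕ) (i : Fin k),
      U i (n + 1) = MvPolynomial.eval (fun j => U j n) (P i)) :
    (∀ n : ℕ, U ⟨0, hk⟩ n = 0) ↔ (∀ n : ℕ, n ≤ Fintype.card F ^ k → U ⟨0, hk⟩ n = 0) := by
  constructor
  · intro h n _
    exact h n
  · intro h
    set m := Fintype.card F ^ k with hm
    set s : ℕ → Fin k → F := fun n i => U i n with hs
    have hstep : ∀ n, s (n + 1) = fun i => MvPolynomial.eval (s n) (P i) := by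
      intro n; funext i; exact hrec n i
    -- pigeonhole on the first m+1 states
    obtain ⟨a, b, hne, hab⟩ :
        ∃ a b : Fin (m + 1), a ≠ b ∧ s a = s b := by
      have hcard : Fintype.card (Fin k → F) < Fintype.card (Fin (m + 1)) := by
        simp [hm]
      obtain ⟨a, b, hne, hab⟩ :=
        Fintype.exists_ne_map_eq_of_card_lt (fun i : Fin (m + 1) => s i) hcard
      exact ⟨a, b, hne, hab⟩
    -- key: if a < b ≤ m with s a = s b, then every state appears among indices ≤ m
    have key : ∀ (a b : ℕ), a < b → b ≤ m → s a = s b → ∀ n, ∃ j ≤ m, s n = s j := by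
      intro a b hab hbm heq
      have shift : ∀ t, s (a + t) = s (b + t) := by
        intro t
        induction t with
        | zero => simpa using heq
        | succ t ih =>
          have h1 : a + (t + 1) = (a + t) + 1 := by ring
          have h2 : b + (t + 1) = (b + t) + 1 := by ring
          rw [h1, h2, hstep, hstep, ih]
      intro n
      induction n with
      | zero => exact ⟨0, Nat.zero_le _, rfl⟩
      | succ n ih =>
        obtain ⟨j, hj, hsj⟩ := ih
        rcases lt_or_eq_of_le hj with hlt | heqj
        · exact ⟨j + 1, hlt, by rw [hstep, hstep, hsj]⟩
        · subst heqj
          -- s (n+1) = s (m+1) = s (b + (m+1-b)) = s (a + (m+1-b))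
          have hb1 : b + (m + 1 - b) = m + 1 := by omega
          have h1 : s (n + 1) = s (m + 1) := by rw [hstep, hstep, hsj]
          have h2 : s (a + (m + 1 - b)) = s (b + (m + 1 - b)) := shift _
          rw [hb1] at h2
          exact ⟨a + (m + 1 - b), by omega, h1.trans h2.symm⟩
    -- apply with the two equal states, ordered
    have main : ∀ n, ∃ j ≤ m, s n = s j := by
      rcases Ne.lt_or_gt hne with hlt | hlt
      · exact key a b (by exact_mod_cast hlt) (by omega) hab
      · exact key b a (by exact_mod_cast hlt) (by omega) hab.symm
    intro n
    obtain ⟨j, hj, hsj⟩ := main n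
    have : s n ⟨0, hk⟩ = s j ⟨0, hk⟩ := by rw [hsj]
    simpa [hs] using this.trans (h j hj)
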